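/- For any partitions α and β, the composition D_α ∘ K_β equals the sum over all partitions λ of K_λ ∘ D_{s_{β/λ} ∗ s_α}. -/

import Mathlib

open scoped TensorProduct Classical

noncomputable section

/-- The single-row Young diagram with `k` boxes, whose Schur function is `h_k`
and whose power sum is `p_k`. -/
def rowDiagram (k : ℕ) : YoungDiagram :=
  YoungDiagram.ofRowLens [k] (List.pairwise_singleton _ k).sortedGE

/-- The quantity `z_λ = ∏ i^{m_i} m_i!` attached to a partition (Young diagram). -/
def zee (μ : YoungDiagram) : ℚ :=
  ((μ.rowLens.prod * (μ.rowLens.dedup.map fun i => (μ.rowLens.count i).factorial).prod : ℕ) : ℚ)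

/-- The ring of symmetric functions over `ℚ`, presented with its Schur basis `s`,
its power-sum basis `p`, the Hall inner product (for which the Schur functions are
orthonormal and `⟨p_λ, p_μ⟩ = δ_{λμ} z_λ`), the skewing operators `D f` (adjoint of
multiplication by `f`), and the Kronecker product `kron`
(determined by `p_λ ∗ p_μ = δ_{λμ} z_λ p_λ`). -/
structure SymmFn (Λ : Type*) [CommRing Λ] [Algebra ℚ Λ] where
  /-- the Schur basis -/
  s : Module.Basis YoungDiagram ℚ Λ
  /-- the power-sum basis -/
  p : Module.Basis YoungDiagram ℚ Λ
  /-- the Hall inner product -/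
  inner : Λ →ₗ[ℚ] Λ →ₗ[ℚ] ℚ
  inner_symm : ∀ f g, inner f g = inner g f
  inner_schur : ∀ μ ν, inner (s μ) (s ν) = if μ = ν then 1 else 0
  inner_power : ∀ μ ν, inner (p μ) (p ν) = if μ = ν then zee μ else 0
  power_mul : ∀ μ : YoungDiagram, p μ = (μ.rowLens.map fun k => p (rowDiagram k)).prod
  /-- the skewing operator `D f`, adjoint of multiplication by `f` -/
  D : Λ → Λ →ₗ[ℚ] Λ
  D_adjoint : ∀ f g h, inner (D f g) h = inner g (f * h)
  /-- the Kronecker (internal) product -/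
  kron : Λ →ₗ[ℚ] Λ →ₗ[ℚ] Λ
  kron_power : ∀ μ ν, kron (p μ) (p ν) = if μ = ν then zee μ • p μ else 0

namespace SymmFn

variable {Λ : Type*} [CommRing Λ] [Algebra ℚ Λ] (S : SymmFn Λ)

/-- The operator `U f` of multiplication by `f`. -/
def U (_S : SymmFn Λ) (f : Λ) : Λ →ₗ[ℚ] Λ := LinearMap.mulLeft ℚ f

/-- The skew Schur function `s_{α/θ} = D_{s_θ}(s_α)`. -/
def skew (α θ : YoungDiagram) : Λ := S.D (S.s θ) (S.s α)


lemma zee_ne_zero (μ : YoungDiagram) : zee μ ≠ 0 := by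
  unfold zee
  rw [Nat.cast_ne_zero, Nat.mul_ne_zero_iff]
  constructor
  · rw [Ne, List.prod_eq_zero_iff]
    intro h
    exact absurd (μ.pos_of_mem_rowLens 0 h) (lt_irrefl 0)
  · rw [Ne, List.prod_eq_zero_iff]
    intro h
    simp only [List.mem_map] at h
    obtain ⟨i, -, hi⟩ := h
    exact (Nat.factorial_ne_zero _) hi

lemma sum_repr'' (b : Module.Basis YoungDiagram ℚ Λ) (x : Λ) :
    ∑ i ∈ (b.repr x).support, b.repr x i • b i = x := by
  conv_rhs => rw [← b.linearCombination_repr x]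
  rw [Finsupp.linearCombination_apply, Finsupp.sum]

lemma inner_p_repr (x : Λ) (ν : YoungDiagram) :
    S.inner x (S.p ν) = S.p.repr x ν * zee ν := by
  conv_lhs => rw [← sum_repr'' S.p x]
  rw [map_sum, LinearMap.sum_apply]
  simp only [map_smul, LinearMap.smul_apply, S.inner_power, smul_eq_mul, mul_ite, mul_zero]
  rw [Finset.sum_ite_eq' (S.p.repr x).support ν (fun i => S.p.repr x i * zee i)]
  by_cases h : ν ∈ (S.p.repr x).support
  · rw [if_pos h]
  · rw [if_neg h, Finsupp.notMem_support_iff.mp h, zero_mul]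

lemma inner_s_repr (x : Λ) (ν : YoungDiagram) :
    S.inner x (S.s ν) = S.s.repr x ν := by
  conv_lhs => rw [← sum_repr'' S.s x]
  rw [map_sum, LinearMap.sum_apply]
  simp only [map_smul, LinearMap.smul_apply, S.inner_schur, smul_eq_mul, mul_ite, mul_zero,
    mul_one]
  rw [Finset.sum_ite_eq' (S.s.repr x).support ν (fun i => S.s.repr x i)]
  by_cases h : ν ∈ (S.s.repr x).support
  · rw [if_pos h]
  · rw [if_neg h, Finsupp.notMem_support_iff.mp h]

lemma ext_inner {x y : Λ} (h : ∀ ν, S.inner x (S.p ν) = S.inner y (S.p ν)) : x = y := by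
  apply S.p.repr.injective
  ext ν
  have h2 := h ν
  rw [S.inner_p_repr, S.inner_p_repr] at h2
  exact mul_right_cancel₀ (zee_ne_zero ν) h2

lemma kron_p (f : Λ) (ν : YoungDiagram) :
    S.kron f (S.p ν) = S.inner f (S.p ν) • S.p ν := by
  conv_lhs => rw [← sum_repr'' S.p f]
  rw [map_sum, LinearMap.sum_apply]
  simp only [map_smul, LinearMap.smul_apply, S.kron_power, smul_ite, smul_zero, smul_smul]
  rw [Finset.sum_ite_eq' (S.p.repr f).support ν (fun i => (S.p.repr f i * zee i) • S.p i)]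
  rw [S.inner_p_repr]
  by_cases h : ν ∈ (S.p.repr f).support
  · rw [if_pos h]
  · rw [if_neg h, Finsupp.notMem_support_iff.mp h, zero_mul, zero_smul]

lemma inner_kron_p (a b : Λ) (ν : YoungDiagram) :
    S.inner (S.kron a b) (S.p ν) = S.inner a (S.p ν) * S.inner b (S.p ν) := by
  conv_lhs => rw [← sum_repr'' S.p b]
  rw [map_sum, map_sum, LinearMap.sum_apply]
  simp only [map_smul, LinearMap.smul_apply, S.kron_p, smul_smul, map_smul, smul_eq_mul,
    S.inner_power, mul_ite, mul_zero]
  rw [Finset.sum_ite_eq' (S.p.repr b).support ν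
    (fun i => S.p.repr b i * S.inner a (S.p i) * zee i)]
  rw [S.inner_p_repr b]
  by_cases h : ν ∈ (S.p.repr b).support
  · rw [if_pos h]; ring
  · rw [if_neg h, Finsupp.notMem_support_iff.mp h, zero_mul, mul_zero]

lemma D_zero : S.D (0 : Λ) = 0 := by
  apply LinearMap.ext
  intro g
  refine S.ext_inner fun ν => ?_
  rw [S.D_adjoint, zero_mul]
  simp

lemma inner_expand (x y : Λ) :
    S.inner x y = ∑ ρ ∈ (S.p.repr y).support, S.p.repr y ρ * S.inner x (S.p ρ) := by
  conv_lhs => rw [← sum_repr'' S.p y]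
  rw [map_sum]
  simp only [map_smul, smul_eq_mul]

lemma inner_expand_s (x y : Λ) :
    S.inner x y = ∑ l ∈ (S.s.repr y).support, S.s.repr y l * S.inner x (S.s l) := by
  conv_lhs => rw [← sum_repr'' S.s y]
  rw [map_sum]
  simp only [map_smul, smul_eq_mul]

def pU (μ ν : YoungDiagram) : YoungDiagram :=
  YoungDiagram.ofRowLens (List.insertionSort (· ≥ ·) (μ.rowLens ++ ν.rowLens))
    (List.pairwise_insertionSort _ _).sortedGE

lemma rowLens_pU (μ ν : YoungDiagram) :
    (pU μ ν).rowLens = List.insertionSort (· ≥ ·) (μ.rowLens ++ ν.rowLens) := by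
  apply YoungDiagram.rowLens_ofRowLens_eq_self
  intro x hx
  rw [(List.perm_insertionSort _ _).mem_iff, List.mem_append] at hx
  rcases hx with h | h
  exacts [μ.pos_of_mem_rowLens x h, ν.pos_of_mem_rowLens x h]

lemma p_mul (μ ν : YoungDiagram) : S.p μ * S.p ν = S.p (pU μ ν) := by
  rw [S.power_mul μ, S.power_mul ν, S.power_mul (pU μ ν), rowLens_pU, ← List.prod_append,
    ← List.map_append]
  exact (((List.perm_insertionSort _ _).map _).prod_eq).symm

lemma skew_inner_p (β l ρ : YoungDiagram) :
    S.inner (S.skew β l) (S.p ρ) = S.s.repr (S.D (S.p ρ) (S.s β)) l := by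
  rw [skew, S.D_adjoint, ← S.inner_s_repr, S.D_adjoint, mul_comm]

/-- Commutation relation `D_α ∘ K_β = ∑_λ K_λ ∘ D_{s_{β/λ} ∗ s_α}`. -/
theorem skewing_comp_kron (α β : YoungDiagram) :
    (S.D (S.s α)) ∘ₗ (S.kron (S.s β)) =
      ∑ᶠ l : YoungDiagram, (S.kron (S.s l)) ∘ₗ (S.D (S.kron (S.skew β l) (S.s α))) := by
  classical
  set F : Finset YoungDiagram :=
    (S.p.repr (S.s α)).support.biUnion
      (fun ρ => (S.s.repr (S.D (S.p ρ) (S.s β))).support) with hF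
  have hg : ∀ l : YoungDiagram, l ∉ F → S.kron (S.skew β l) (S.s α) = 0 := by
    intro l hl
    refine S.ext_inner fun ρ => ?_
    rw [S.inner_kron_p, map_zero, LinearMap.zero_apply]
    by_cases hρ : ρ ∈ (S.p.repr (S.s α)).support
    · have h0 : S.s.repr (S.D (S.p ρ) (S.s β)) l = 0 := by
        by_contra hc
        exact hl (Finset.mem_biUnion.mpr ⟨ρ, hρ, Finsupp.mem_support_iff.mpr hc⟩)
      rw [S.skew_inner_p, h0, zero_mul]
    · rw [S.inner_p_repr (S.s α), Finsupp.notMem_support_iff.mp hρ, zero_mul, mul_zero]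
  have hsupp : (Function.support fun l =>
      (S.kron (S.s l)) ∘ₗ (S.D (S.kron (S.skew β l) (S.s α)))) ⊆ ↑F := by
    intro l hl
    by_contra hlF
    apply hl
    show S.kron (S.s l) ∘ₗ S.D ((S.kron (S.skew β l)) (S.s α)) = 0
    rw [hg l hlF, S.D_zero, LinearMap.comp_zero]
  rw [finsum_eq_sum_of_support_subset _ hsupp]
  apply S.p.ext
  intro μ
  refine S.ext_inner fun ν => ?_
  set q : Λ := S.D (S.p ν) (S.p μ) with hq
  -- left-hand side
  rw [LinearMap.comp_apply, S.kron_p, map_smul, map_smul, LinearMap.smul_apply, smul_eq_mul,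
    S.D_adjoint]
  -- right-hand side : push the sum through
  rw [LinearMap.sum_apply, map_sum, LinearMap.sum_apply]
  have hterm : ∀ l : YoungDiagram,
      S.inner ((S.kron (S.s l) ∘ₗ S.D (S.kron (S.skew β l) (S.s α))) (S.p μ)) (S.p ν)
        = S.s.repr (S.p ν) l *
          ∑ ρ ∈ (S.p.repr q).support,
            S.p.repr q ρ * (S.s.repr (S.D (S.p ρ) (S.s β)) l * S.inner (S.s α) (S.p ρ)) := by
    intro l
    rw [LinearMap.comp_apply, S.inner_kron_p, S.D_adjoint]
    have h1 : S.inner (S.p μ) (S.kron (S.skew β l) (S.s α) * S.p ν)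
        = S.inner (S.kron (S.skew β l) (S.s α)) q := by
      rw [S.inner_symm (S.kron (S.skew β l) (S.s α)) q, hq, S.D_adjoint, mul_comm]
    rw [h1, S.inner_symm (S.s l) (S.p ν), S.inner_s_repr,
      S.inner_expand (S.kron (S.skew β l) (S.s α)) q]
    congr 1
    apply Finset.sum_congr rfl
    intro ρ _
    rw [S.inner_kron_p, S.skew_inner_p]
  rw [Finset.sum_congr rfl fun l _ => hterm l]
  -- now both sides are concrete scalar sums
  have hswap : ∑ l ∈ F, S.s.repr (S.p ν) l *
      ∑ ρ ∈ (S.p.repr q).support,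
        S.p.repr q ρ * (S.s.repr (S.D (S.p ρ) (S.s β)) l * S.inner (S.s α) (S.p ρ))
      = ∑ ρ ∈ (S.p.repr q).support, S.p.repr q ρ *
          (S.inner (S.p ν) (S.D (S.p ρ) (S.s β)) * S.inner (S.s α) (S.p ρ)) := by
    simp_rw [Finset.mul_sum]
    rw [Finset.sum_comm]
    apply Finset.sum_congr rfl
    intro ρ _
    by_cases ha : S.inner (S.s α) (S.p ρ) = 0
    · simp [ha]
    · have hρ : ρ ∈ (S.p.repr (S.s α)).support := by
        rw [Finsupp.mem_support_iff]
        intro h0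
        exact ha (by rw [S.inner_p_repr, h0, zero_mul])
      have hHsub : (S.s.repr (S.D (S.p ρ) (S.s β))).support ⊆ F := by
        intro l hl
        exact Finset.mem_biUnion.mpr ⟨ρ, hρ, hl⟩
      rw [← Finset.sum_subset hHsub (fun l _ hl => by
        rw [Finsupp.notMem_support_iff.mp hl]; ring)]
      rw [S.inner_expand_s (S.p ν) (S.D (S.p ρ) (S.s β)), Finset.sum_mul, Finset.mul_sum]
      apply Finset.sum_congr rfl
      intro l _
      rw [S.inner_s_repr]
      ring
  rw [hswap]
  -- left side expansion
  have hL : S.inner (S.p μ) (S.s α * S.p ν) = S.inner (S.s α) q := by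
    rw [S.inner_symm (S.s α) q, hq, S.D_adjoint, mul_comm]
  rw [hL, S.inner_expand (S.s α) q, Finset.mul_sum]
  apply Finset.sum_congr rfl
  intro ρ _
  by_cases hc : S.p.repr q ρ = 0
  · rw [hc]; ring
  · have hqρ : S.inner q (S.p ρ) ≠ 0 := by
      rw [S.inner_p_repr]
      exact mul_ne_zero hc (zee_ne_zero ρ)
    have hμ : μ = pU ν ρ := by
      rw [hq, S.D_adjoint, S.p_mul, S.inner_power] at hqρ
      by_contra hne
      rw [if_neg hne] at hqρ
      exact hqρ rfl
    have hpb : S.inner (S.p ν) (S.D (S.p ρ) (S.s β)) = S.inner (S.s β) (S.p μ) := by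
      rw [S.inner_symm, S.D_adjoint, mul_comm, S.p_mul, hμ]
    rw [hpb]
    ring

end SymmFn
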